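/- The graph H_1 is 4-χρ-vertex-critical; that is, χρ(H_1) = 4 and χρ(H_1 − v) < 4 for every vertex v of H_1. -/

import Mathlib

open SimpleGraph

/-- A `k`-packing coloring of `G`: colors in `{1,…,k}` and distinct vertices of equal color `i`
are at (extended, shortest-path) distance greater than `i`. -/
def IsPackingColoring {V : Type*} (G : SimpleGraph V) (k : ℕ) (c : V → ℕ) : Prop :=
  (∀ v, 1 ≤ c v ∧ c v ≤ k) ∧
    ∀ u v : V, u ≠ v → c u = c v → (c u : ℕ∞) < G.edist u v

/-- The packing chromatic number of `G`: the least `k` admitting a `k`-packing coloring. -/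
noncomputable def packingChromaticNumber {V : Type*} (G : SimpleGraph V) : ℕ :=
  sInf {k | ∃ c : V → ℕ, IsPackingColoring G k c}

/-- `G` is `4`-`χρ`-vertex-critical: `χρ(G) = 4` and deleting any vertex drops `χρ` below `4`. -/
def FourVertexCritical {V : Type*} (G : SimpleGraph V) : Prop :=
  packingChromaticNumber G = 4 ∧
    ∀ v : V, packingChromaticNumber (G.induce ({v}ᶜ : Set V)) < 4

/-- `G` contains a (not necessarily induced) subgraph isomorphic to `H`. -/
def HasCopy {W V : Type*} (H : SimpleGraph W) (G : SimpleGraph V) : Prop :=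
  ∃ f : H →g G, Function.Injective f

/-- The cycle on `n` vertices (for `n ≥ 3`). -/
def CycGraph (n : ℕ) : SimpleGraph (Fin n) :=
  SimpleGraph.fromRel (fun i j => (i.val + 1) % n = j.val)

/-- `H₁`: vertices `a=0, b=1, c=2, d=3, e=4`; edges `ab, ad, bd, ae, de, bc`. -/
def H1graph : SimpleGraph (Fin 5) :=
  SimpleGraph.fromRel (fun i j =>
    (i.val = 0 ∧ j.val = 1) ∨ (i.val = 0 ∧ j.val = 3) ∨ (i.val = 1 ∧ j.val = 3) ∨
      (i.val = 0 ∧ j.val = 4) ∨ (i.val = 3 ∧ j.val = 4) ∨ (i.val = 1 ∧ j.val = 2))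


instance : DecidableRel H1graph.Adj := fun a b =>
  decidable_of_iff _ (SimpleGraph.fromRel_adj _ a b).symm

lemma one_lt_edist {V : Type*} (G : SimpleGraph V) {u v : V} (hne : u ≠ v)
    (hadj : ¬ G.Adj u v) : 1 < G.edist u v := by
  refine lt_of_le_of_ne (Order.one_le_iff_pos.mpr (SimpleGraph.edist_pos_of_ne hne)) ?_
  exact fun h => hadj (SimpleGraph.edist_eq_one_iff_adj.mp h.symm)

lemma packing_of_ones {V : Type*} (G : SimpleGraph V) (k : ℕ) (f : V → ℕ)
    (hb : ∀ x, 1 ≤ f x ∧ f x ≤ k)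
    (hp : ∀ x y, x ≠ y → f x = f y → ¬ G.Adj x y ∧ f x = 1) :
    IsPackingColoring G k f := by
  refine ⟨hb, fun u v hne hc => ?_⟩
  obtain ⟨hna, h1⟩ := hp u v hne hc
  rw [h1]
  simpa using one_lt_edist G hne hna

lemma no3 : ¬ ∃ c : Fin 5 → ℕ, IsPackingColoring H1graph 3 c := by
  rintro ⟨c, hb, hp⟩
  have E : ∀ u v : Fin 5, u ≠ v → c u = c v → ∀ n : ℕ, H1graph.edist u v ≤ n → c u < n := by
    intro u v huv hc n hle
    exact_mod_cast lt_of_lt_of_le (hp u v huv hc) hle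
  have A : ∀ u v : Fin 5, H1graph.Adj u v → c u ≠ c v := by
    intro u v ha h
    have := E u v ha.ne h 1 (SimpleGraph.edist_eq_one_iff_adj.mpr ha).le
    have := (hb u).1
    omega
  have n01 := A 0 1 (by decide)
  have n03 := A 0 3 (by decide)
  have n13 := A 1 3 (by decide)
  have n04 := A 0 4 (by decide)
  have n34 := A 3 4 (by decide)
  have n12 := A 1 2 (by decide)
  have w02 : H1graph.edist 0 2 ≤ 2 := by
    exact SimpleGraph.edist_le
      (Walk.cons (by decide : H1graph.Adj 0 1) (Walk.cons (by decide : H1graph.Adj 1 2) Walk.nil))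
  have w23 : H1graph.edist 2 3 ≤ 2 := by
    exact SimpleGraph.edist_le
      (Walk.cons (by decide : H1graph.Adj 2 1) (Walk.cons (by decide : H1graph.Adj 1 3) Walk.nil))
  have w14 : H1graph.edist 1 4 ≤ 2 := by
    exact SimpleGraph.edist_le
      (Walk.cons (by decide : H1graph.Adj 1 0) (Walk.cons (by decide : H1graph.Adj 0 4) Walk.nil))
  have d02 := (eq_or_ne (c 0) (c 2)).imp (fun h => E 0 2 (by decide) h 2 w02) id
  have d23 := (eq_or_ne (c 2) (c 3)).imp (fun h => E 2 3 (by decide) h 2 w23) id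
  have d14 := (eq_or_ne (c 1) (c 4)).imp (fun h => E 1 4 (by decide) h 2 w14) id
  have b0 := hb 0; have b1 := hb 1; have b2 := hb 2; have b3 := hb 3; have b4 := hb 4
  omega

lemma induced_three (w : Fin 5) (f : Fin 5 → ℕ)
    (h1 : ∀ x : Fin 5, x ≠ w → 1 ≤ f x ∧ f x ≤ 3)
    (h2 : ∀ x y : Fin 5, x ≠ w → y ≠ w → x ≠ y → f x = f y → ¬ H1graph.Adj x y ∧ f x = 1) :
    ∃ c, IsPackingColoring (H1graph.induce ({w}ᶜ : Set (Fin 5))) 3 c := by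
  refine ⟨fun x => f x.1, packing_of_ones _ _ _
    (fun x => h1 x.1 (Set.mem_compl_singleton_iff.mp x.2)) ?_⟩
  rintro ⟨x, hx⟩ ⟨y, hy⟩ hne hc
  have hxy : x ≠ y := fun h => hne (Subtype.ext h)
  obtain ⟨hna, hone⟩ := h2 x y (Set.mem_compl_singleton_iff.mp hx)
    (Set.mem_compl_singleton_iff.mp hy) hxy hc
  exact ⟨by simpa [SimpleGraph.comap_adj] using hna, hone⟩

theorem H1_fourVertexCritical : FourVertexCritical H1graph := by
  have hmem4 : 4 ∈ {k | ∃ c : Fin 5 → ℕ, IsPackingColoring H1graph k c} := by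
    refine ⟨![2, 1, 3, 4, 1], packing_of_ones _ _ _ (by decide) ?_⟩
    decide
  constructor
  · refine le_antisymm (Nat.sInf_le hmem4) ?_
    by_contra hlt
    push_neg at hlt
    rw [packingChromaticNumber] at hlt
    have hne : {k | ∃ c : Fin 5 → ℕ, IsPackingColoring H1graph k c}.Nonempty := ⟨4, hmem4⟩
    obtain ⟨c, hb, hp⟩ := Nat.sInf_mem hne
    exact no3 ⟨c, ⟨fun v => ⟨(hb v).1, le_trans (hb v).2 (by omega)⟩, hp⟩⟩
  · intro v
    have h3 : ∃ c, IsPackingColoring (H1graph.induce ({v}ᶜ : Set (Fin 5))) 3 c := by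
      fin_cases v
      · exact induced_three 0 ![1, 2, 1, 1, 3] (by decide) (by decide)
      · exact induced_three 1 ![1, 1, 1, 2, 3] (by decide) (by decide)
      · exact induced_three 2 ![2, 1, 1, 3, 1] (by decide) (by decide)
      · exact induced_three 3 ![2, 1, 3, 1, 1] (by decide) (by decide)
      · exact induced_three 4 ![2, 3, 1, 1, 1] (by decide) (by decide)
    exact lt_of_le_of_lt (Nat.sInf_le h3) (by norm_num)
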